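/- Let (X, ρ) be a finite distance space that is d-embeddable for an integer d ≥ 1, let Y ⊊ X be an independent set, and let x ∈ X \ Y. Then (Y ∪ {x}, ρ) is |Y|-embeddable. -/

import Mathlib

/-- `(X, ρ)` is a distance space: `ρ` is symmetric, nonnegative and vanishes on the
diagonal on the points of `X`. -/
def IsDistance {α : Type*} (X : Finset α) (ρ : α → α → ℝ) : Prop :=
  (∀ x ∈ X, ∀ y ∈ X, ρ x y = ρ y x) ∧ (∀ x ∈ X, ∀ y ∈ X, 0 ≤ ρ x y) ∧ (∀ x ∈ X, ρ x x = 0)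

/-- `(X, ρ)` is isometrically embeddable into `ℝ^d`. -/
def IsEmbeddable {α : Type*} (X : Finset α) (ρ : α → α → ℝ) (d : ℕ) : Prop :=
  ∃ φ : α → EuclideanSpace ℝ (Fin d), ∀ x ∈ X, ∀ y ∈ X, ρ x y = dist (φ x) (φ y)

/-- `(X, ρ)` is strongly `d`-embeddable: `d`-embeddable but (for `d ≥ 1`)
not `(d-1)`-embeddable. -/
def IsStronglyEmbeddable {α : Type*} (X : Finset α) (ρ : α → α → ℝ) (d : ℕ) : Prop :=
  IsEmbeddable X ρ d ∧ (0 < d → ¬ IsEmbeddable X ρ (d - 1))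

/-- A nonempty set `Y` with `|Y| = r + 1` is independent if `(Y, ρ)` is strongly
`r`-embeddable. -/
def IsIndependent {α : Type*} (Y : Finset α) (ρ : α → α → ℝ) : Prop :=
  Y.Nonempty ∧ IsStronglyEmbeddable Y ρ (Y.card - 1)

/-- Padding isometry `ℝ^k → ℝ^m` for `k ≤ m`. -/
noncomputable def padIso (k m : ℕ) (hkm : k ≤ m) :
    EuclideanSpace ℝ (Fin k) →ₗᵢ[ℝ] EuclideanSpace ℝ (Fin m) where
  toLinearMap :=
    { toFun := fun v => WithLp.toLp 2 (fun i : Fin m => if h : (i : ℕ) < k then v ⟨i, h⟩ else 0)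
      map_add' := by
        intro u v; ext i; by_cases h : (i : ℕ) < k <;> simp [h]
      map_smul' := by
        intro c v; ext i; by_cases h : (i : ℕ) < k <;> simp [h] }
  norm_map' := by
    intro v
    rw [EuclideanSpace.norm_eq, EuclideanSpace.norm_eq]
    congr 1
    show ∑ i : Fin m, ‖(if h : (i : ℕ) < k then v ⟨i, h⟩ else 0)‖ ^ 2
        = ∑ i : Fin k, ‖v i‖ ^ 2
    set f : Fin m → ℝ := fun i => ‖(if h : (i : ℕ) < k then v ⟨i, h⟩ else 0)‖ ^ 2 with hf
    have h1 : ∑ i : Fin m, f i = ∑ i ∈ Finset.univ.map (Fin.castLEEmb hkm), f i := by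
      refine (Finset.sum_subset (Finset.subset_univ _) ?_).symm
      intro i _ hi
      have hik : ¬ (i : ℕ) < k := by
        intro h
        exact hi (Finset.mem_map.2 ⟨⟨i, h⟩, Finset.mem_univ _, by
          simp [Fin.castLEEmb, Fin.castLE]⟩)
      simp [hf, hik]
    rw [h1, Finset.sum_map]
    simp [hf, Fin.castLEEmb, Fin.castLE]

/-- if `(X, ρ)` is `d`-embeddable, `Y ⊊ X` is independent and
`x ∈ X \ Y`, then `(Y ∪ {x}, ρ)` is `|Y|`-embeddable. -/
theorem stmt9 {α : Type*} [DecidableEq α] (X : Finset α) (ρ : α → α → ℝ)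
    (hD : IsDistance X ρ) (d : ℕ) (hd : 1 ≤ d) (hX : IsEmbeddable X ρ d)
    (Y : Finset α) (hYX : Y ⊂ X) (hY : IsIndependent Y ρ)
    (x : α) (hx : x ∈ X) (hxY : x ∉ Y) :
    IsEmbeddable (insert x Y) ρ Y.card := by
  classical
  obtain ⟨φ, hφ⟩ := hX
  set S : Submodule ℝ (EuclideanSpace ℝ (Fin d)) :=
    Submodule.span ℝ ((Y.image fun a => φ a - φ x : Finset _) : Set _) with hS
  have hmem : ∀ a ∈ insert x Y, φ a - φ x ∈ S := by
    intro a ha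
    rcases Finset.mem_insert.1 ha with rfl | ha
    · simpa using S.zero_mem
    · exact Submodule.subset_span (Finset.mem_coe.2
        (Finset.mem_image.2 ⟨a, ha, rfl⟩))
  have hfin : Module.finrank ℝ S ≤ Y.card :=
    le_trans (finrank_span_finset_le_card _) Finset.card_image_le
  set k := Module.finrank ℝ S with hk
  let b := stdOrthonormalBasis ℝ S
  let L := padIso k Y.card hfin
  refine ⟨fun a => if ha : a ∈ insert x Y then
      L (b.repr ⟨φ a - φ x, hmem a ha⟩) else 0, ?_⟩
  intro p hp q hq
  have hins : insert x Y ⊆ X := Finset.insert_subset hx hYX.subset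
  simp only [dif_pos hp, dif_pos hq]
  rw [L.dist_map, b.repr.dist_map, Subtype.dist_eq]
  have heq : dist (φ p - φ x) (φ q - φ x) = dist (φ p) (φ q) := by
    rw [dist_eq_norm, dist_eq_norm]; congr 1; abel
  rw [heq]
  exact hφ p (hins hp) q (hins hq)
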